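/- Let f ∈ O and let g ∈ (f) + J(f). Let 𝔻 := ℂ[ε]/(ε²) be the ring of dual numbers, A := 𝔻[[x₁,…,xₙ]] (the formal power series ring over 𝔻, equivalently O ⊗_ℂ 𝔻), and F := f + ε·g ∈ A. Then the quotient A/((F) + (∂F/∂x₁, …, ∂F/∂xₙ)) is a flat 𝔻-module. (In deformation-theoretic terms: any trivial first-order infinitesimal deformation of a hypersurface X₀ = V(f) has flat relative Tjurina module T¹(X_D/D) over the double point D.) -/

import Mathlib

set_option synthInstance.maxHeartbeats 400000

/-- Formal partial derivative of a multivariate power series with respect to variable `i`. -/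
noncomputable def pd {n : ℕ} {R : Type*} [CommSemiring R] (i : Fin n)
    (f : MvPowerSeries (Fin n) R) : MvPowerSeries (Fin n) R :=
  fun m => (m i + 1) • f (m + Finsupp.single i 1)

/-- The Jacobian ideal `J(f) = (∂f/∂x₁, …, ∂f/∂xₙ)` of a power series `f`. -/
noncomputable def jacIdeal {n : ℕ} {R : Type*} [CommRing R] (f : MvPowerSeries (Fin n) R) :
    Ideal (MvPowerSeries (Fin n) R) :=
  Ideal.span (Set.range fun i : Fin n => pd i f)

set_option maxHeartbeats 2000000
set_option synthInstance.maxHeartbeats 1000000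

namespace pdAux
open MvPowerSeries Finset
variable {n : ℕ} {R S : Type*} [CommSemiring R] [CommSemiring S]

lemma coeff_pd (i : Fin n) (x : MvPowerSeries (Fin n) R) (m : Fin n →₀ ℕ) :
    coeff m (pd i x) = (m i + 1) • coeff (m + Finsupp.single i 1) x := rfl

lemma pd_add (i : Fin n) (x y : MvPowerSeries (Fin n) R) :
    pd i (x + y) = pd i x + pd i y := by
  apply MvPowerSeries.ext; intro m
  simp [coeff_pd, smul_add]

lemma pd_zero (i : Fin n) : pd i (0 : MvPowerSeries (Fin n) R) = 0 := by
  apply MvPowerSeries.ext; intro m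
  simp [coeff_pd]

lemma pd_sum {α : Type*} (i : Fin n) (s : Finset α) (x : α → MvPowerSeries (Fin n) R) :
    pd i (∑ j ∈ s, x j) = ∑ j ∈ s, pd i (x j) := by
  classical
  induction s using Finset.induction with
  | empty => simp [pd_zero]
  | insert _ _ h ih => simp [Finset.sum_insert h, pd_add, ih]

lemma pd_map (i : Fin n) (φ : R →+* S) (x : MvPowerSeries (Fin n) R) :
    pd i (MvPowerSeries.map φ x) = MvPowerSeries.map φ (pd i x) := by
  apply MvPowerSeries.ext; intro m
  simp [coeff_pd, coeff_map]

lemma pd_C (i : Fin n) (r : R) : pd i (C (σ := Fin n) r) = 0 := by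
  apply MvPowerSeries.ext; intro m
  have h : m + Finsupp.single i 1 ≠ 0 := by
    intro h
    have := DFunLike.congr_fun h i
    simp at this
  simp [coeff_pd, coeff_C, h]

lemma pd_comm (i j : Fin n) (x : MvPowerSeries (Fin n) R) :
    pd i (pd j x) = pd j (pd i x) := by
  apply MvPowerSeries.ext; intro m
  simp only [coeff_pd, ← smul_assoc, smul_eq_mul]
  rw [add_right_comm m (Finsupp.single j 1) (Finsupp.single i 1)]
  congr 1
  simp only [Finsupp.add_apply, Finsupp.single_apply]
  rcases eq_or_ne i j with h | h
  · subst h; simp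
  · simp [h, h.symm]
    ring

lemma sum_shift (i : Fin n) (m : Fin n →₀ ℕ) (G : (Fin n →₀ ℕ) → (Fin n →₀ ℕ) → R) :
    ∑ s ∈ Finset.HasAntidiagonal.antidiagonal (m + Finsupp.single i 1), ((s.1 : Fin n →₀ ℕ) i) • G s.1 s.2
      = ∑ s ∈ Finset.HasAntidiagonal.antidiagonal m, ((s.1 : Fin n →₀ ℕ) i + 1) • G (s.1 + Finsupp.single i 1) s.2 := by
  classical
  conv_lhs => rw [← Finset.sum_filter_of_ne (p := fun s => (s.1 : Fin n →₀ ℕ) i ≠ 0)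
      (fun s _ hne h0 => hne (by rw [h0, zero_smul]))]
  refine Finset.sum_bij' (fun a _ => (a.1 - Finsupp.single i 1, a.2))
    (fun b _ => (b.1 + Finsupp.single i 1, b.2)) ?_ ?_ ?_ ?_ ?_
  · intro a ha
    rw [Finset.mem_filter, Finset.HasAntidiagonal.mem_antidiagonal] at ha
    have hle : Finsupp.single i 1 ≤ a.1 :=
      Finsupp.single_le_iff.mpr (Nat.one_le_iff_ne_zero.mpr ha.2)
    have hc : a.1 - Finsupp.single i 1 + Finsupp.single i 1 = a.1 :=
      tsub_add_cancel_of_le hle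
    rw [Finset.HasAntidiagonal.mem_antidiagonal]
    have : (a.1 - Finsupp.single i 1 + a.2) + Finsupp.single i 1 = m + Finsupp.single i 1 := by
      rw [add_right_comm, hc, ha.1]
    exact add_right_cancel this
  · intro b hb
    rw [Finset.HasAntidiagonal.mem_antidiagonal] at hb
    rw [Finset.mem_filter, Finset.HasAntidiagonal.mem_antidiagonal]
    constructor
    · rw [add_right_comm, hb]
    · simp
  · intro a ha
    rw [Finset.mem_filter, Finset.HasAntidiagonal.mem_antidiagonal] at ha
    have hle : Finsupp.single i 1 ≤ a.1 :=
      Finsupp.single_le_iff.mpr (Nat.one_le_iff_ne_zero.mpr ha.2)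
    exact Prod.ext (tsub_add_cancel_of_le hle) rfl
  · intro b _
    exact Prod.ext (add_tsub_cancel_right _ _) rfl
  · intro a ha
    rw [Finset.mem_filter, Finset.HasAntidiagonal.mem_antidiagonal] at ha
    have hle : Finsupp.single i 1 ≤ a.1 :=
      Finsupp.single_le_iff.mpr (Nat.one_le_iff_ne_zero.mpr ha.2)
    have hc : a.1 - Finsupp.single i 1 + Finsupp.single i 1 = a.1 :=
      tsub_add_cancel_of_le hle
    rw [hc]
    congr 1
    rw [Finsupp.tsub_apply, Finsupp.single_apply, if_pos rfl]
    omega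

/-- **Leibniz rule** for formal partial derivatives of multivariate power series. -/
lemma pd_mul (i : Fin n) (x y : MvPowerSeries (Fin n) R) :
    pd i (x * y) = pd i x * y + x * pd i y := by
  classical
  apply MvPowerSeries.ext; intro m
  rw [coeff_pd, map_add, coeff_mul, coeff_mul, coeff_mul, Finset.smul_sum]
  have hsplit : ∀ s ∈ Finset.HasAntidiagonal.antidiagonal (m + Finsupp.single i 1),
      (m i + 1) • (coeff s.1 x * coeff s.2 y)
        = ((s.1 : Fin n →₀ ℕ) i) • (coeff s.1 x * coeff s.2 y)
          + ((s.2 : Fin n →₀ ℕ) i) • (coeff s.1 x * coeff s.2 y) := by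
    intro s hs
    rw [Finset.HasAntidiagonal.mem_antidiagonal] at hs
    have : s.1 i + s.2 i = m i + 1 := by
      have := DFunLike.congr_fun hs i
      simpa using this
    rw [← add_smul, this]
  rw [Finset.sum_congr rfl hsplit, Finset.sum_add_distrib]
  congr 1
  · rw [sum_shift i m (fun p q => coeff p x * coeff q y)]
    refine Finset.sum_congr rfl fun s _ => ?_
    rw [coeff_pd, smul_mul_assoc]
  · have hswap : ∑ s ∈ Finset.HasAntidiagonal.antidiagonal (m + Finsupp.single i 1),
        ((s.2 : Fin n →₀ ℕ) i) • (coeff s.1 x * coeff s.2 y)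
          = ∑ s ∈ Finset.HasAntidiagonal.antidiagonal (m + Finsupp.single i 1),
            ((s.1 : Fin n →₀ ℕ) i) • (coeff s.2 x * coeff s.1 y) := by
      refine Finset.sum_nbij' (fun s => Prod.swap s) (fun s => Prod.swap s) ?_ ?_ ?_ ?_ ?_ <;>
        simp +contextual [Finset.HasAntidiagonal.swap_mem_antidiagonal, mul_comm, add_comm]
    rw [hswap, sum_shift i m (fun p q => coeff q x * coeff p y)]
    conv_rhs => rw [← Finset.HasAntidiagonal.map_swap_antidiagonal (n := m)]
    rw [Finset.sum_map]
    refine Finset.sum_congr rfl fun s _ => ?_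
    simp only [coeff_pd, Function.Embedding.coeFn_mk, Prod.snd_swap, Prod.fst_swap, smul_eq_mul,
      nsmul_eq_mul, Nat.cast_add, Nat.cast_one]
    ring

end pdAux

section flatcrit
open TensorProduct

lemma span_tensor_repr {R : Type*} [CommRing R] (M : Type*) [AddCommGroup M] [Module R M]
    (t : R) (x : (Ideal.span {t} : Ideal R) ⊗[R] M) :
    ∃ m : M, x = (⟨t, Ideal.mem_span_singleton_self t⟩ : Ideal.span {t}) ⊗ₜ[R] m := by
  induction x with
  | zero => exact ⟨0, (tmul_zero _ _).symm⟩
  | tmul y m =>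
      obtain ⟨c, hc⟩ := Ideal.mem_span_singleton'.mp y.2
      refine ⟨c • m, ?_⟩
      have hy : y = c • (⟨t, Ideal.mem_span_singleton_self t⟩ : Ideal.span {t}) := by
        apply Subtype.ext
        simp [← hc, smul_eq_mul]
      rw [hy, smul_tmul]
  | add x y hx hy =>
      obtain ⟨m₁, rfl⟩ := hx
      obtain ⟨m₂, rfl⟩ := hy
      exact ⟨m₁ + m₂, (tmul_add _ _ _).symm⟩

lemma dualNumber_ideal_cases (I : Ideal (DualNumber ℂ)) :
    I = Ideal.span {0} ∨ I = Ideal.span {1} ∨ I = Ideal.span {DualNumber.eps} := by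
  by_cases htop : ∃ x ∈ I, TrivSqZeroExt.fst x ≠ 0
  · obtain ⟨x, hxI, hx⟩ := htop
    right; left
    rw [Ideal.span_singleton_one]
    exact Ideal.eq_top_of_isUnit_mem I hxI
      (TrivSqZeroExt.isUnit_iff_isUnit_fst.mpr (isUnit_iff_ne_zero.mpr hx))
  · push_neg at htop
    by_cases hbot : I = ⊥
    · left; rw [hbot, eq_comm, Ideal.span_singleton_eq_bot]
    · right; right
      obtain ⟨x, hxI, hx0⟩ := Submodule.exists_mem_ne_zero_of_ne_bot hbot
      have hfst := htop x hxI
      have hsnd : TrivSqZeroExt.snd x ≠ 0 := by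
        intro h
        exact hx0 (by ext <;> simp [hfst, h])
      apply le_antisymm
      · intro y hyI
        rw [Ideal.mem_span_singleton]
        exact ⟨TrivSqZeroExt.inl y.snd, by
          ext <;> simp [htop y hyI]⟩
      · rw [Ideal.span_le, Set.singleton_subset_iff]
        have : (DualNumber.eps : DualNumber ℂ) = TrivSqZeroExt.inl (x.snd)⁻¹ * x := by
          ext <;> simp [hfst, hsnd]
        rw [this]
        exact Ideal.mul_mem_left _ _ hxI

/-- Flatness criterion over the dual numbers: if the annihilator of `ε` in `M` is `ε • M`,
then `M` is flat. -/
lemma flat_of_eps_cond (M : Type*) [AddCommGroup M] [Module (DualNumber ℂ) M]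
    (h : ∀ m : M, (DualNumber.eps : DualNumber ℂ) • m = 0 →
      ∃ m', m = (DualNumber.eps : DualNumber ℂ) • m') :
    Module.Flat (DualNumber ℂ) M := by
  rw [Module.Flat.iff_rTensor_injective']
  intro I
  rw [injective_iff_map_eq_zero]
  have key : ∀ (t : DualNumber ℂ) (x : (Ideal.span {t} : Ideal (DualNumber ℂ)) ⊗[DualNumber ℂ] M),
      LinearMap.rTensor M (Ideal.span {t} : Ideal (DualNumber ℂ)).subtype x = 0 →
      ∃ m : M, x = (⟨t, Ideal.mem_span_singleton_self t⟩ : Ideal.span {t}) ⊗ₜ[DualNumber ℂ] m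
        ∧ t • m = 0 := by
    intro t x hx
    obtain ⟨m, rfl⟩ := span_tensor_repr M t x
    refine ⟨m, rfl, ?_⟩
    rw [LinearMap.rTensor_tmul] at hx
    have := congrArg (TensorProduct.lid (DualNumber ℂ) M) hx
    simpa using this
  rcases dualNumber_ideal_cases I with hI | hI | hI <;> subst hI <;> intro x hx
  · obtain ⟨m, rfl, -⟩ := key 0 x hx
    have : (⟨(0 : DualNumber ℂ), Ideal.mem_span_singleton_self 0⟩ :
        (Ideal.span {(0 : DualNumber ℂ)} : Ideal (DualNumber ℂ))) = 0 := rfl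
    rw [this, zero_tmul]
  · obtain ⟨m, rfl, hm⟩ := key 1 x hx
    rw [one_smul] at hm
    rw [hm, tmul_zero]
  · obtain ⟨m, rfl, hm⟩ := key DualNumber.eps x hx
    obtain ⟨m', rfl⟩ := h m hm
    rw [← smul_tmul]
    have : (DualNumber.eps : DualNumber ℂ) •
        (⟨DualNumber.eps, Ideal.mem_span_singleton_self _⟩ :
          (Ideal.span {(DualNumber.eps : DualNumber ℂ)} : Ideal (DualNumber ℂ))) = 0 := by
      apply Subtype.ext
      simp [smul_eq_mul, DualNumber.eps_mul_eps]
    rw [this, zero_tmul]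

end flatcrit

namespace pdAux
open MvPowerSeries

variable {n : ℕ}

/-- Membership in `(f) + J(f)` gives an explicit representation. -/
lemma mem_decomp {S : Type*} [CommRing S] (f : MvPowerSeries (Fin n) S)
    (x : MvPowerSeries (Fin n) S) (hx : x ∈ Ideal.span {f} + jacIdeal f) :
    ∃ (a : MvPowerSeries (Fin n) S) (b : Fin n → MvPowerSeries (Fin n) S),
      x = a * f + ∑ i, b i * pd i f := by
  rw [Ideal.add_eq_sup] at hx
  obtain ⟨u, hu, v, hv, rfl⟩ := Submodule.mem_sup.mp hx
  obtain ⟨a, rfl⟩ := Ideal.mem_span_singleton'.mp hu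
  obtain ⟨b, rfl⟩ := (Submodule.mem_span_range_iff_exists_fun _).mp hv
  exact ⟨a, b, by simp [smul_eq_mul]⟩

lemma f_mem {S : Type*} [CommRing S] (f : MvPowerSeries (Fin n) S) :
    f ∈ Ideal.span {f} + jacIdeal f := by
  rw [Ideal.add_eq_sup]
  exact Submodule.mem_sup_left (Ideal.mem_span_singleton_self f)

lemma pd_mem {S : Type*} [CommRing S] (f : MvPowerSeries (Fin n) S) (j : Fin n) :
    pd j f ∈ Ideal.span {f} + jacIdeal f := by
  rw [Ideal.add_eq_sup]
  exact Submodule.mem_sup_right (Ideal.subset_span ⟨j, rfl⟩)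

/-- The key syzygy computation: if `g ∈ (f) + J(f)` and `p f + ∑ qᵢ ∂ᵢ f = 0`,
then `p g + ∑ qᵢ ∂ᵢ g ∈ (f) + J(f)`. -/
lemma syzygy_key (f g : MvPowerSeries (Fin n) ℂ)
    (hg : g ∈ Ideal.span {f} + jacIdeal f)
    (p : MvPowerSeries (Fin n) ℂ) (q : Fin n → MvPowerSeries (Fin n) ℂ)
    (hsyz : p * f + ∑ i, q i * pd i f = 0) :
    p * g + ∑ i, q i * pd i g ∈ Ideal.span {f} + jacIdeal f := by
  set I0 := Ideal.span {f} + jacIdeal f with hI0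
  obtain ⟨a, b, hab⟩ := mem_decomp f g hg
  have hpdg : ∀ i, pd i g = (pd i a * f + a * pd i f + ∑ j, pd i (b j) * pd j f)
      + ∑ j, b j * pd i (pd j f) := by
    intro i
    rw [hab, pd_add, pd_mul, pd_sum]
    have : ∀ j ∈ Finset.univ, pd i (b j * pd j f)
        = pd i (b j) * pd j f + b j * pd i (pd j f) := fun j _ => pd_mul i _ _
    rw [Finset.sum_congr rfl this, Finset.sum_add_distrib]
    ring
  have hDj : ∀ j, ∑ i, q i * pd j (pd i f) ∈ I0 := by
    intro j
    have h0 : pd j (p * f + ∑ i, q i * pd i f) = 0 := by rw [hsyz, pd_zero]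
    rw [pd_add, pd_mul, pd_sum] at h0
    have hterm : ∀ i ∈ Finset.univ, pd j (q i * pd i f)
        = pd j (q i) * pd i f + q i * pd j (pd i f) := fun i _ => pd_mul j _ _
    rw [Finset.sum_congr rfl hterm, Finset.sum_add_distrib] at h0
    have heq : ∑ i, q i * pd j (pd i f)
        = -(pd j p * f + p * pd j f + ∑ i, pd j (q i) * pd i f) := by
      linear_combination h0
    rw [heq]
    refine neg_mem (add_mem (add_mem ?_ ?_) ?_)
    · exact Ideal.mul_mem_left _ _ (f_mem f)
    · exact Ideal.mul_mem_left _ _ (pd_mem f j)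
    · exact Ideal.sum_mem _ fun i _ => Ideal.mul_mem_left _ _ (pd_mem f i)
  have swap : ∑ i, ∑ j, q i * (b j * pd i (pd j f))
      = ∑ j, b j * ∑ i, q i * pd j (pd i f) := by
    rw [Finset.sum_comm]
    refine Finset.sum_congr rfl fun j _ => ?_
    rw [Finset.mul_sum]
    refine Finset.sum_congr rfl fun i _ => ?_
    rw [pd_comm]
    ring
  have expand : ∑ i, q i * pd i g
      = (∑ i, q i * (pd i a * f + a * pd i f + ∑ j, pd i (b j) * pd j f))
        + ∑ j, b j * ∑ i, q i * pd j (pd i f) := by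
    rw [← swap, ← Finset.sum_add_distrib]
    refine Finset.sum_congr rfl fun i _ => ?_
    rw [hpdg i, mul_add, Finset.mul_sum]
  rw [expand]
  refine add_mem (Ideal.mul_mem_left _ _ hg) (add_mem ?_ ?_)
  · refine Ideal.sum_mem _ fun i _ => Ideal.mul_mem_left _ _ ?_
    refine add_mem (add_mem ?_ ?_) ?_
    · exact Ideal.mul_mem_left _ _ (f_mem f)
    · exact Ideal.mul_mem_left _ _ (pd_mem f i)
    · exact Ideal.sum_mem _ fun j _ => Ideal.mul_mem_left _ _ (pd_mem f j)
  · exact Ideal.sum_mem _ fun j _ => Ideal.mul_mem_left _ _ (hDj j)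

/-- The coefficientwise inclusion `ℂ[[x]] → 𝔻[[x]]`. -/
noncomputable def phi (n : ℕ) :
    MvPowerSeries (Fin n) ℂ →+* MvPowerSeries (Fin n) (DualNumber ℂ) :=
  MvPowerSeries.map (σ := Fin n) (algebraMap ℂ (DualNumber ℂ))

/-- The coefficientwise projection `𝔻[[x]] → ℂ[[x]]`, first component. -/
noncomputable def pi0 (n : ℕ) :
    MvPowerSeries (Fin n) (DualNumber ℂ) →+* MvPowerSeries (Fin n) ℂ :=
  MvPowerSeries.map (σ := Fin n) (TrivSqZeroExt.fstHom ℂ ℂ ℂ).toRingHom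

/-- The coefficientwise projection `𝔻[[x]] → ℂ[[x]]`, second component. -/
noncomputable def pi1 (n : ℕ) :
    MvPowerSeries (Fin n) (DualNumber ℂ) →+ MvPowerSeries (Fin n) ℂ where
  toFun x := fun m => (x m).snd
  map_zero' := by funext m; rfl
  map_add' x y := by funext m; exact TrivSqZeroExt.snd_add _ _

lemma coeff_pi1 (x : MvPowerSeries (Fin n) (DualNumber ℂ)) (m : Fin n →₀ ℕ) :
    coeff m (pi1 n x) = (coeff m x).snd := rfl

lemma pi0_phi (x : MvPowerSeries (Fin n) ℂ) : pi0 n (phi n x) = x := by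
  apply MvPowerSeries.ext; intro m
  simp [pi0, phi, coeff_map, TrivSqZeroExt.algebraMap_eq_inl']

lemma pi1_phi (x : MvPowerSeries (Fin n) ℂ) : pi1 n (phi n x) = 0 := by
  apply MvPowerSeries.ext; intro m
  simp [coeff_pi1, phi, coeff_map, TrivSqZeroExt.algebraMap_eq_inl']

lemma pi0_C_eps_mul (x : MvPowerSeries (Fin n) (DualNumber ℂ)) :
    pi0 n (C (σ := Fin n) (R := DualNumber ℂ) DualNumber.eps * x) = 0 := by
  apply MvPowerSeries.ext; intro m
  simp [pi0, coeff_map, coeff_C_mul]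

lemma pi1_C_eps_mul (x : MvPowerSeries (Fin n) (DualNumber ℂ)) :
    pi1 n (C (σ := Fin n) (R := DualNumber ℂ) DualNumber.eps * x) = pi0 n x := by
  apply MvPowerSeries.ext; intro m
  simp [coeff_pi1, pi0, coeff_map, coeff_C_mul]

lemma pi1_mul (x y : MvPowerSeries (Fin n) (DualNumber ℂ)) :
    pi1 n (x * y) = pi0 n x * pi1 n y + pi1 n x * pi0 n y := by
  classical
  apply MvPowerSeries.ext; intro m
  rw [map_add, coeff_pi1, coeff_mul, coeff_mul, coeff_mul, ← Finset.sum_add_distrib,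
    ← TrivSqZeroExt.sndHom_apply ℂ, map_sum]
  refine Finset.sum_congr rfl fun s _ => ?_
  simp only [TrivSqZeroExt.sndHom_apply, TrivSqZeroExt.snd_mul, smul_eq_mul,
    MulOpposite.smul_eq_mul_unop, MulOpposite.unop_op, pi0, coeff_map, coeff_pi1]
  have hfst : ∀ z : DualNumber ℂ, (TrivSqZeroExt.fstHom ℂ ℂ ℂ).toRingHom z
      = TrivSqZeroExt.fst z := fun z => rfl
  rw [hfst, hfst]

lemma pi0_pd (i : Fin n) (x : MvPowerSeries (Fin n) (DualNumber ℂ)) :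
    pi0 n (pd i x) = pd i (pi0 n x) :=
  (pd_map i _ x).symm

lemma phi_pd (i : Fin n) (x : MvPowerSeries (Fin n) ℂ) :
    phi n (pd i x) = pd i (phi n x) :=
  (pd_map i _ x).symm

lemma pi1_pd (i : Fin n) (x : MvPowerSeries (Fin n) (DualNumber ℂ)) :
    pi1 n (pd i x) = pd i (pi1 n x) := by
  apply MvPowerSeries.ext; intro m
  rw [coeff_pi1, coeff_pd, coeff_pd, coeff_pi1]
  exact map_nsmul (TrivSqZeroExt.sndHom ℂ ℂ).toAddMonoidHom _ _

lemma decomp (a : MvPowerSeries (Fin n) (DualNumber ℂ)) :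
    a = phi n (pi0 n a) + C (σ := Fin n) (R := DualNumber ℂ) DualNumber.eps * phi n (pi1 n a) := by
  apply MvPowerSeries.ext; intro m
  rw [map_add, coeff_C_mul]
  simp only [phi, coeff_map, coeff_pi1]
  show (coeff m) a = algebraMap ℂ (DualNumber ℂ) _ + DualNumber.eps * algebraMap ℂ (DualNumber ℂ) _
  rw [TrivSqZeroExt.algebraMap_eq_inl', TrivSqZeroExt.algebraMap_eq_inl']
  apply TrivSqZeroExt.ext <;> simp [pi0, coeff_map]

end pdAux

open pdAux MvPowerSeries

/-- let `g ∈ (f) + J(f)`, let `𝔻 = ℂ[ε]` be the dual numbers,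
`A = 𝔻[[x₁,…,xₙ]]` and `F = f + ε·g ∈ A`.  Then `A/((F) + (∂F/∂x₁,…,∂F/∂xₙ))` is a flat
`𝔻`-module: any trivial first-order infinitesimal deformation of the hypersurface
`X₀ = V(f)` has flat relative Tjurina module over the double point. -/
theorem trivial_first_order_deformation_flat_T1 (n : ℕ) (hn : 1 ≤ n)
    (f g : MvPowerSeries (Fin n) ℂ)
    (hg : g ∈ Ideal.span {f} + jacIdeal f)
    (F : MvPowerSeries (Fin n) (DualNumber ℂ))
    (hF : F = MvPowerSeries.map (σ := Fin n) (algebraMap ℂ (DualNumber ℂ)) f +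
      MvPowerSeries.C (σ := Fin n) (R := DualNumber ℂ) DualNumber.eps *
        MvPowerSeries.map (σ := Fin n) (algebraMap ℂ (DualNumber ℂ)) g) :
    Module.Flat (DualNumber ℂ)
      (MvPowerSeries (Fin n) (DualNumber ℂ) ⧸ (Ideal.span {F} + jacIdeal F)) := by
  classical
  set I : Ideal (MvPowerSeries (Fin n) (DualNumber ℂ)) := Ideal.span {F} + jacIdeal F with hI
  set Cε : MvPowerSeries (Fin n) (DualNumber ℂ) := C (σ := Fin n) (R := DualNumber ℂ) DualNumber.eps
    with hCε
  have hFphi : F = phi n f + Cε * phi n g := hF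
  -- basic facts about F
  have hpi0F : pi0 n F = f := by
    rw [hFphi, map_add, pi0_phi, pi0_C_eps_mul, add_zero]
  have hpi1F : pi1 n F = g := by
    rw [hFphi, map_add, pi1_phi, pi1_C_eps_mul, pi0_phi, zero_add]
  have hpdF0 : ∀ i, pi0 n (pd i F) = pd i f := by
    intro i; rw [pi0_pd, hpi0F]
  have hpdF1 : ∀ i, pi1 n (pd i F) = pd i g := by
    intro i; rw [pi1_pd, hpi1F]
  have hCesq : Cε * Cε = 0 := by
    rw [hCε, ← map_mul, DualNumber.eps_mul_eps, map_zero]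
  have hpdFi : ∀ i, pd i F = pd i (phi n f) + Cε * pd i (phi n g) := by
    intro i
    rw [hFphi, pd_add, pd_mul, pd_C, zero_mul, zero_add]
  -- scalar multiplication by ε on the quotient
  have hsmul : ∀ a : MvPowerSeries (Fin n) (DualNumber ℂ),
      (DualNumber.eps : DualNumber ℂ) • (Ideal.Quotient.mk I a)
        = Ideal.Quotient.mk I (Cε * a) := by
    intro a
    have h1 : (Cε * a) = (DualNumber.eps : DualNumber ℂ) • a :=
      (MvPowerSeries.smul_eq_C_mul a _).symm
    rw [h1]
    exact (Submodule.Quotient.mk_smul I _ a).symm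
  apply flat_of_eps_cond
  intro m hm
  obtain ⟨a, rfl⟩ := Ideal.Quotient.mk_surjective m
  rw [hsmul a, Ideal.Quotient.eq_zero_iff_mem] at hm
  have hdec := decomp a
  have hCa0 : Cε * phi n (pi0 n a) ∈ I := by
    have heq : Cε * a = Cε * phi n (pi0 n a) := by
      calc Cε * a = Cε * (phi n (pi0 n a) + Cε * phi n (pi1 n a)) := by rw [← hdec]
        _ = Cε * phi n (pi0 n a) + (Cε * Cε) * phi n (pi1 n a) := by ring
        _ = Cε * phi n (pi0 n a) := by rw [hCesq, zero_mul, add_zero]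
    rwa [heq] at hm
  obtain ⟨p, q, hpq⟩ := mem_decomp F _ hCa0
  -- first component: a syzygy of (f, ∂᷈f)
  have hsyz : pi0 n p * f + ∑ i, pi0 n (q i) * pd i f = 0 := by
    have h0 : (0 : MvPowerSeries (Fin n) ℂ) = pi0 n (p * F + ∑ i, q i * pd i F) := by
      rw [← hpq, pi0_C_eps_mul]
    rw [map_add, map_mul, map_sum, hpi0F] at h0
    simp_rw [map_mul, hpdF0] at h0
    exact h0.symm
  -- second component: expression for pi0 a
  have ha0 : pi0 n a = (pi0 n p * g + ∑ i, pi0 n (q i) * pd i g)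
      + (pi1 n p * f + ∑ i, pi1 n (q i) * pd i f) := by
    have h1 : pi1 n (Cε * phi n (pi0 n a)) = pi0 n a := by rw [pi1_C_eps_mul, pi0_phi]
    have h2 := congrArg (pi1 n) hpq
    rw [h1, map_add, pi1_mul, map_sum, hpi0F, hpi1F] at h2
    have h3 : ∀ i ∈ Finset.univ, pi1 n (q i * pd i F)
        = pi0 n (q i) * pd i g + pi1 n (q i) * pd i f := by
      intro i _
      rw [pi1_mul, hpdF0, hpdF1]
    rw [Finset.sum_congr rfl h3, Finset.sum_add_distrib] at h2
    linear_combination h2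
  have ha0mem : pi0 n a ∈ Ideal.span {f} + jacIdeal f := by
    rw [ha0]
    refine add_mem (syzygy_key f g hg _ _ hsyz) (add_mem ?_ ?_)
    · exact Ideal.mul_mem_left _ _ (f_mem f)
    · exact Ideal.sum_mem _ fun i _ => Ideal.mul_mem_left _ _ (pd_mem f i)
  obtain ⟨u, v, huv⟩ := mem_decomp f _ ha0mem
  set w : MvPowerSeries (Fin n) (DualNumber ℂ) :=
    -(phi n u * phi n g + ∑ i, phi n (v i) * pd i (phi n g)) with hw
  have hQF : Ideal.Quotient.mk I F = 0 := Ideal.Quotient.eq_zero_iff_mem.mpr (f_mem F)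
  have hQpdF : ∀ i, Ideal.Quotient.mk I (pd i F) = 0 :=
    fun i => Ideal.Quotient.eq_zero_iff_mem.mpr (pd_mem F i)
  have hQφf : Ideal.Quotient.mk I (phi n f) = -(Ideal.Quotient.mk I (Cε * phi n g)) := by
    have hsub : phi n f = F - Cε * phi n g := by rw [hFphi]; ring
    rw [hsub, map_sub, hQF, zero_sub]
  have hQpdφf : ∀ i, Ideal.Quotient.mk I (pd i (phi n f))
      = -(Ideal.Quotient.mk I (Cε * pd i (phi n g))) := by
    intro i
    have hsub : pd i (phi n f) = pd i F - Cε * pd i (phi n g) := by rw [hpdFi i]; ring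
    rw [hsub, map_sub, hQpdF, zero_sub]
  have hker : phi n (pi0 n a) - Cε * w = phi n u * F + ∑ i, phi n (v i) * pd i F := by
    rw [huv, map_add, map_mul, map_sum, hw]
    have h6 : ∀ i ∈ Finset.univ, phi n (v i * pd i f)
        = phi n (v i) * pd i F - Cε * (phi n (v i) * pd i (phi n g)) := by
      intro i _
      rw [map_mul, phi_pd, hpdFi i]
      ring
    rw [Finset.sum_congr rfl h6, Finset.sum_sub_distrib, mul_neg, mul_add, Finset.mul_sum,
      hFphi]
    ring
  have hQφa0 : Ideal.Quotient.mk I (phi n (pi0 n a)) = Ideal.Quotient.mk I (Cε * w) := by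
    rw [Ideal.Quotient.mk_eq_mk_iff_sub_mem, hker]
    refine add_mem (Ideal.mul_mem_left _ _ (f_mem F)) ?_
    exact Ideal.sum_mem _ fun i _ => Ideal.mul_mem_left _ _ (pd_mem F i)
  refine ⟨Ideal.Quotient.mk I (w + phi n (pi1 n a)), ?_⟩
  rw [hsmul]
  have h5 : Ideal.Quotient.mk I a = Ideal.Quotient.mk I (phi n (pi0 n a))
      + Ideal.Quotient.mk I (Cε * phi n (pi1 n a)) := by
    rw [← map_add, ← hdec]
  rw [h5, hQφa0, ← map_add, ← mul_add]
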